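/- Let a > 0 be a rational real number, and for an integer k ≥ 2 set N_a(k) := min( π²·⌈a·k/(a+1)⌉²/a² , π²·⌈k/(a+1)⌉² ) and c_a(k) := (N_a(k) − π²·k²/(a+1)²)/k. Then the set of cluster points of the sequence (c_a(k))_{k≥2} is finite. -/

import Mathlib

set_option maxHeartbeats 800000

open Real Filter Topology

/-- Rational case of Theorem 6.6: the set of cluster points of `(c_a(k))_{k≥2}`
is finite. -/
theorem stmt6 (a : ℝ) (ha : 0 < a) (hrat : ∃ q : ℚ, a = (q : ℝ))
    (N c : ℤ → ℝ)
    (hN : ∀ k : ℤ, N k = min (π ^ 2 * ((⌈a * (k : ℝ) / (a + 1)⌉ : ℝ)) ^ 2 / a ^ 2)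
        (π ^ 2 * ((⌈(k : ℝ) / (a + 1)⌉ : ℝ)) ^ 2))
    (hc : ∀ k : ℤ, c k = (N k - π ^ 2 * (k : ℝ) ^ 2 / (a + 1) ^ 2) / (k : ℝ)) :
    {x : ℝ | MapClusterPt x atTop (fun n : ℕ => c ((n : ℤ) + 2))}.Finite := by
  obtain ⟨r, rfl⟩ := hrat
  set a : ℝ := (r : ℝ) with ha'
  have hr : 0 < r := by
    have h := ha
    rw [ha'] at h
    exact_mod_cast h
  set p : ℤ := r.num with hp'
  set d : ℕ := r.den with hd'
  have hp : 0 < p := Rat.num_pos.mpr hr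
  have hdpos : 0 < (d : ℝ) := by positivity
  have ha1 : 0 < a + 1 := by linarith
  have hpd : a * (d : ℝ) = (p : ℝ) := by
    rw [ha', Rat.cast_def]
    field_simp
    rw [hp', hd']; ring
  set mZ : ℤ := p + (d : ℤ) with hmZ'
  have hm1 : a * (mZ : ℝ) / (a + 1) = (p : ℝ) := by
    have : (mZ : ℝ) = (p : ℝ) + (d : ℝ) := by push_cast [hmZ']; ring
    rw [this]
    field_simp
    nlinarith [hpd]
  have hm2 : (mZ : ℝ) / (a + 1) = (d : ℝ) := by
    have : (mZ : ℝ) = (p : ℝ) + (d : ℝ) := by push_cast [hmZ']; ring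
    rw [this]
    field_simp
    nlinarith [hpd]
  -- the periodic "fractional part" function
  set s : ℤ → ℝ := fun k =>
    min (((⌈a * (k : ℝ) / (a + 1)⌉ : ℝ) - a * (k : ℝ) / (a + 1)) / a)
        ((⌈(k : ℝ) / (a + 1)⌉ : ℝ) - (k : ℝ) / (a + 1)) with hs'
  have hsper : ∀ k : ℤ, s (k + mZ) = s k := by
    intro k
    have e1 : a * ((k : ℝ) + (mZ : ℝ)) / (a + 1) = a * (k : ℝ) / (a + 1) + (p : ℝ) := by
      rw [← hm1]; ring
    have e2 : ((k : ℝ) + (mZ : ℝ)) / (a + 1) = (k : ℝ) / (a + 1) + (d : ℝ) := by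
      rw [← hm2]; ring
    simp only [hs', Int.cast_add, e1, e2]
    rw [Int.ceil_add_intCast, Int.ceil_add_natCast]
    congr 1 <;> push_cast <;> ring
  have hsnn : ∀ k : ℤ, 0 ≤ s k := by
    intro k
    apply le_min
    · exact div_nonneg (by linarith [Int.le_ceil (a * (k : ℝ) / (a + 1))]) ha.le
    · linarith [Int.le_ceil ((k : ℝ) / (a + 1))]
  -- closed formula for c on positive integers
  have hckey : ∀ k : ℤ, 0 < k → c k = π ^ 2 * s k * (2 / (a + 1) + s k / (k : ℝ)) := by
    intro k hk
    have hk0 : (0 : ℝ) < (k : ℝ) := by exact_mod_cast hk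
    set t : ℝ := (k : ℝ) / (a + 1) with ht'
    have htpos : 0 < t := div_pos hk0 ha1
    set s1 : ℝ := ((⌈a * (k : ℝ) / (a + 1)⌉ : ℝ) - a * (k : ℝ) / (a + 1)) / a with hs1'
    set s2 : ℝ := (⌈(k : ℝ) / (a + 1)⌉ : ℝ) - (k : ℝ) / (a + 1) with hs2'
    have hs1nn : 0 ≤ s1 :=
      div_nonneg (by linarith [Int.le_ceil (a * (k : ℝ) / (a + 1))]) ha.le
    have hs2nn : 0 ≤ s2 := by
      simp only [hs2']; linarith [Int.le_ceil ((k : ℝ) / (a + 1))]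
    have hc1 : (⌈a * (k : ℝ) / (a + 1)⌉ : ℝ) = a * (t + s1) := by
      simp only [hs1', ht']; field_simp; ring
    have hc2 : (⌈(k : ℝ) / (a + 1)⌉ : ℝ) = t + s2 := by
      simp only [hs2', ht']; ring
    have hA : π ^ 2 * ((⌈a * (k : ℝ) / (a + 1)⌉ : ℝ)) ^ 2 / a ^ 2 = π ^ 2 * (t + s1) ^ 2 := by
      rw [hc1]; field_simp
    have hB : π ^ 2 * ((⌈(k : ℝ) / (a + 1)⌉ : ℝ)) ^ 2 = π ^ 2 * (t + s2) ^ 2 := by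
      rw [hc2]
    have hmin : min (π ^ 2 * (t + s1) ^ 2) (π ^ 2 * (t + s2) ^ 2)
        = π ^ 2 * (t + min s1 s2) ^ 2 := by
      rcases le_total s1 s2 with h | h
      · rw [min_eq_left h, min_eq_left]
        have hsq : (t + s1) ^ 2 ≤ (t + s2) ^ 2 := by nlinarith
        exact mul_le_mul_of_nonneg_left hsq (sq_nonneg π)
      · rw [min_eq_right h, min_eq_right]
        have hsq : (t + s2) ^ 2 ≤ (t + s1) ^ 2 := by nlinarith
        exact mul_le_mul_of_nonneg_left hsq (sq_nonneg π)
    have hts : s k = min s1 s2 := rfl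
    have hW : π ^ 2 * (k : ℝ) ^ 2 / (a + 1) ^ 2 = π ^ 2 * t ^ 2 := by
      simp only [ht']; field_simp
    rw [hc, hN, hA, hB, hmin, hW, hts]
    have hk0' : (k : ℝ) ≠ 0 := ne_of_gt hk0
    have ha1' : a + 1 ≠ 0 := ne_of_gt ha1
    generalize min s1 s2 = u
    rw [ht']
    field_simp
    ring
  -- natural-number version
  set mN : ℕ := p.toNat + d with hmN'
  have hmNpos : 0 < mN := by
    have : 0 < p.toNat := Int.lt_toNat.mpr hp
    omega
  have hmNZ : (mN : ℤ) = mZ := by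
    simp only [hmN', hmZ']
    push_cast [Int.toNat_of_nonneg hp.le]
    ring
  set σ : ℕ → ℝ := fun n => s ((n : ℤ) + 2) with hσ'
  have hσper : Function.Periodic σ mN := by
    intro n
    simp only [hσ']
    have : ((n + mN : ℕ) : ℤ) + 2 = ((n : ℤ) + 2) + mZ := by
      push_cast [hmNZ]; ring
    rw [this, hsper]
  have hσmod : ∀ n, σ n = σ (n % mN) := fun n => (hσper.map_mod_nat n).symm
  -- the candidate finite set of cluster points
  set L : ℕ → ℝ := fun n => π ^ 2 * σ n * (2 / (a + 1)) with hL'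
  set S : Finset ℝ := (Finset.range mN).image L with hS'
  have hLS : ∀ n, L n ∈ S := by
    intro n
    rw [hS']
    refine Finset.mem_image.mpr ⟨n % mN, Finset.mem_range.mpr (Nat.mod_lt _ hmNpos), ?_⟩
    simp only [hL']; rw [← hσmod]
  -- uniform bound on σ^2
  set M : ℝ := ((Finset.range mN).image (fun n => (σ n) ^ 2)).max'
    (Finset.Nonempty.image ⟨0, Finset.mem_range.mpr hmNpos⟩ _) with hM'
  have hMb : ∀ n, (σ n) ^ 2 ≤ M := by
    intro n
    rw [hσmod n]
    exact Finset.le_max' ((Finset.range mN).image (fun n => (σ n) ^ 2)) _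
      (Finset.mem_image.mpr ⟨n % mN, Finset.mem_range.mpr (Nat.mod_lt _ hmNpos), rfl⟩)
  -- error estimate
  have herr : ∀ n : ℕ, dist (c ((n : ℤ) + 2)) (L n) ≤ π ^ 2 * M / ((n : ℝ) + 2) := by
    intro n
    have hk : (0 : ℤ) < (n : ℤ) + 2 := by positivity
    have hck := hckey ((n : ℤ) + 2) hk
    have hcast : (((n : ℤ) + 2 : ℤ) : ℝ) = (n : ℝ) + 2 := by push_cast; ring
    have hn2 : (0 : ℝ) < (n : ℝ) + 2 := by positivity
    rw [Real.dist_eq, hck, hL', hcast]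
    have : π ^ 2 * σ n * (2 / (a + 1) + σ n / ((n : ℝ) + 2))
        - π ^ 2 * σ n * (2 / (a + 1)) = π ^ 2 * (σ n) ^ 2 / ((n : ℝ) + 2) := by
      simp only [hσ']; field_simp; ring
    rw [this, abs_of_nonneg (by positivity)]
    gcongr
    exact hMb n
  -- main argument: cluster points lie in S
  apply Set.Finite.subset S.finite_toSet
  intro x hx
  by_contra hxS
  -- choose ε
  have hSne : S.Nonempty := ⟨L 0, hLS 0⟩
  set ε : ℝ := ((S.image (fun y => dist x y)).min'
    (hSne.image _)) / 3 with hε'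
  have hεpos : 0 < ε := by
    rw [hε']
    have : ∀ z ∈ S.image (fun y => dist x y), 0 < z := by
      intro z hz
      obtain ⟨y, hy, rfl⟩ := Finset.mem_image.mp hz
      refine dist_pos.mpr (fun h => hxS ?_)
      exact Finset.mem_coe.mpr (h ▸ hy)
    have := this _ (Finset.min'_mem (S.image (fun y => dist x y)) (hSne.image _))
    linarith
  have hεS : ∀ y ∈ S, 3 * ε ≤ dist x y := by
    intro y hy
    have := Finset.min'_le (S.image (fun y => dist x y)) (dist x y)
      (Finset.mem_image_of_mem _ hy)
    rw [hε']; linarith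
  -- frequently close to x
  have hfreq : ∃ᶠ n : ℕ in atTop, c ((n : ℤ) + 2) ∈ Metric.ball x ε :=
    (mapClusterPt_iff_frequently.mp hx) _ (Metric.ball_mem_nhds x hεpos)
  -- eventually error small
  have hM0 : 0 ≤ M := le_trans (sq_nonneg (σ 0)) (hMb 0)
  have htend : Tendsto (fun n : ℕ => π ^ 2 * M / ((n : ℝ) + 2)) atTop (𝓝 0) := by
    have h1 := tendsto_const_div_atTop_nhds_zero_nat (π ^ 2 * M)
    have h2 : Tendsto (fun n : ℕ => n + 2) atTop atTop := tendsto_add_atTop_nat 2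
    have h3 := h1.comp h2
    have heq : (fun n : ℕ => π ^ 2 * M / ((n : ℝ) + 2))
        = (fun n : ℕ => π ^ 2 * M / (n : ℝ)) ∘ (fun n : ℕ => n + 2) := by
      funext n
      simp only [Function.comp_apply]
      push_cast
      ring
    rw [heq]
    exact h3
  have hev : ∀ᶠ n : ℕ in atTop, π ^ 2 * M / ((n : ℝ) + 2) < ε :=
    htend.eventually_lt_const hεpos
  obtain ⟨n, hn1, hn2⟩ := (hfreq.and_eventually hev).exists
  have h1 : dist x (c ((n : ℤ) + 2)) < ε := by
    rw [dist_comm]; exact Metric.mem_ball.mp hn1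
  have h2 : dist (c ((n : ℤ) + 2)) (L n) < ε := lt_of_le_of_lt (herr n) hn2
  have h3 : 3 * ε ≤ dist x (L n) := hεS _ (hLS n)
  have := dist_triangle x (c ((n : ℤ) + 2)) (L n)
  linarith
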